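/- For any W ∈ ℝ^{m×r}, α(W) ≥ σ(W), where α(W) = min_{1≤j≤r} min_{x∈Δ} ‖W(:,j) - W(:,J)x‖₂ (J = {1,...,r}\{j}) and σ(W) denotes the smallest singular value σ_r(W) when m ≥ r, and 0 when m < r. -/

import Mathlib

noncomputable section

open scoped BigOperators

abbrev E (m : ℕ) := EuclideanSpace ℝ (Fin m)

def toE {m : ℕ} (x : Fin m → ℝ) : E m := WithLp.toLp 2 x

/-- The unit simplex `Δ = {y | y ≥ 0, ∑ y ≤ 1}`. -/
def simplex (n : Type*) [Fintype n] : Set (n → ℝ) :=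
  {y | (∀ i, 0 ≤ y i) ∧ ∑ i, y i ≤ 1}

/-- Assumption 2 of the paper: `f` is `μ`-strongly convex with `L`-Lipschitz
gradient `f'`, and `0` is its global minimizer with `f 0 = 0`. -/
structure GoodF {m : ℕ} (f : E m → ℝ) (f' : E m → E m) (μ L : ℝ) : Prop where
  mu_pos : 0 < μ
  grad : ∀ x, HasGradientAt f (f' x) x
  lip : ∀ x y : E m, ‖f' x - f' y‖ ≤ L * ‖x - y‖
  sconv : ∀ x y : E m, ∀ δ : ℝ, 0 ≤ δ → δ ≤ 1 →
    f (δ • x + (1 - δ) • y) ≤ δ * f x + (1 - δ) * f y - μ / 2 * δ * (1 - δ) * ‖x - y‖ ^ 2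
  f_zero : f 0 = 0
  min_zero : ∀ x, f 0 ≤ f x

/-- A minimizer over the unit simplex of `y ↦ f (x - B y)` (chosen via choice). -/
def argminSimplex {m : ℕ} {n : Type*} [Fintype n] (f : E m → ℝ)
    (B : Matrix (Fin m) n ℝ) (x : E m) : n → ℝ :=
  Classical.epsilon fun y => y ∈ simplex n ∧
    ∀ z ∈ simplex n, f (x - toE (B.mulVec y)) ≤ f (x - toE (B.mulVec z))

/-- The residual `R_B^f(x) = x - B y*` where `y* = argmin_{y ∈ Δ} f (x - B y)`. -/
def resid {m : ℕ} {n : Type*} [Fintype n] (f : E m → ℝ)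
    (B : Matrix (Fin m) n ℝ) (x : E m) : E m :=
  x - toE (B.mulVec (argminSimplex f B x))

/-- Column-wise residual matrix `R_B^f(A)`. -/
def residMat {m : ℕ} {n k : Type*} [Fintype n] (f : E m → ℝ)
    (B : Matrix (Fin m) n ℝ) (A : Matrix (Fin m) k ℝ) : Matrix (Fin m) k ℝ :=
  fun i j => resid f B (toE fun i' => A i' j) i

/-- `‖N‖_{1,2}`: the maximum `ℓ₂` column norm. -/
def norm12 {m : ℕ} {n : Type*} [Fintype n] (N : Matrix (Fin m) n ℝ) : ℝ :=
  sSup {c | ∃ j, c = ‖toE fun i => N i j‖}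

/-- `α(W)`: minimum distance between a column of `W` and the convex hull of the
other columns of `W` and the origin. -/
def alpha {m r : ℕ} (W : Matrix (Fin m) (Fin r) ℝ) : ℝ :=
  sInf {c | ∃ (j : Fin r) (x : Fin r → ℝ), x ∈ simplex (Fin r) ∧ x j = 0 ∧
    c = ‖toE (fun i => W i j) - toE (W.mulVec x)‖}

/-- `σ(W)`: smallest singular value (`min_{‖z‖₂ ≥ 1} ‖Wz‖₂`) if `m ≥ r`, and `0` if `m < r`. -/
def smin {m r : ℕ} (W : Matrix (Fin m) (Fin r) ℝ) : ℝ :=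
  if r ≤ m then sInf {c | ∃ z : Fin r → ℝ, 1 ≤ ‖toE z‖ ∧ c = ‖toE (W.mulVec z)‖} else 0

/-- `[B, x]`: append the column `x` to `B`. -/
def appendCol {m s : ℕ} (B : Matrix (Fin m) (Fin s) ℝ) (x : E m) :
    Matrix (Fin m) (Fin (s + 1)) ℝ :=
  fun i => Fin.snoc (fun j => B i j) (x i)

/-- `[A, B]`: horizontal concatenation. -/
def appendMat {m k s : ℕ} (A : Matrix (Fin m) (Fin k) ℝ) (B : Matrix (Fin m) (Fin s) ℝ) :
    Matrix (Fin m) (Fin (k + s)) ℝ :=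
  fun i => Fin.append (fun j => A i j) (fun j => B i j)

/-- `ω(P) = min (min_i ‖p_i‖₂, (1/√2) min_{i ≠ j} ‖p_i - p_j‖₂)`. -/
def omegaM {m : ℕ} {k : Type*} [Fintype k] (P : Matrix (Fin m) k ℝ) : ℝ :=
  sInf ({c | ∃ i, c = ‖toE fun a => P a i‖} ∪
    {c | ∃ i j, i ≠ j ∧ c = (Real.sqrt 2)⁻¹ * ‖(toE fun a => P a i) - toE fun a => P a j‖})

/-- `β(W) = min (ν_β(W), γ_β(W)/√2)` as in the paper. -/
def beta {m r : ℕ} (f : E m → ℝ) (W : Matrix (Fin m) (Fin r) ℝ) : ℝ :=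
  sInf ({c | ∃ j : Fin r,
      c = ‖resid f (W.submatrix id fun p : {i // i ≠ j} => (p : Fin r)) (toE fun a => W a j)‖} ∪
    {c | ∃ (i j : Fin r) (J : Finset (Fin r)), i ≠ j ∧ i ∉ J ∧ j ∉ J ∧
      c = (Real.sqrt 2)⁻¹ *
        ‖resid f (W.submatrix id fun p : J => (p : Fin r)) (toE fun a => W a i) -
         resid f (W.submatrix id fun p : J => (p : Fin r)) (toE fun a => W a j)‖})

theorem Matrix.isHermitian_transpose_mul_self {m n : Type*} [Fintype m]
    (A : Matrix m n ℝ) : (A.transpose * A).IsHermitian := by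
  simpa [Matrix.conjTranspose_eq_transpose_of_trivial] using
    Matrix.isHermitian_conjTranspose_mul_self A

/-- Singular values of `B` in nonincreasing order (`i`-th largest at index `i`). -/
def singVals {m s : ℕ} (B : Matrix (Fin m) (Fin s) ℝ) : Fin s → ℝ := fun i =>
  Real.sqrt (((Matrix.isHermitian_transpose_mul_self B).eigenvalues ∘
    Tuple.sort (Matrix.isHermitian_transpose_mul_self B).eigenvalues) i.rev)

/-- The spectral norm `‖N‖₂` (ℓ₂ operator norm). -/
def spec {m s : ℕ} (N : Matrix (Fin m) (Fin s) ℝ) : ℝ :=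
  ‖LinearMap.toContinuousLinearMap (Matrix.toEuclideanLin N)‖

theorem stmt7 (m r : ℕ) (W : Matrix (Fin m) (Fin r) ℝ) :
    smin W ≤ alpha W := by
  have hA_nonneg : ∀ c ∈ {c | ∃ (j : Fin r) (x : Fin r → ℝ), x ∈ simplex (Fin r) ∧ x j = 0 ∧
      c = ‖toE (fun i => W i j) - toE (W.mulVec x)‖}, (0:ℝ) ≤ c := by
    rintro c ⟨j, x, _, _, rfl⟩; exact norm_nonneg _
  rcases Nat.eq_zero_or_pos r with hr | hr
  · subst hr
    have hA : alpha W = 0 := by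
      unfold alpha
      convert Real.sInf_empty using 2
      ext c; simp only [Set.mem_empty_iff_false, iff_false, Set.mem_setOf_eq]
      rintro ⟨j, _⟩; exact j.elim0
    rw [hA]
    unfold smin
    split
    · have : {c | ∃ z : Fin 0 → ℝ, 1 ≤ ‖toE z‖ ∧ c = ‖toE (W.mulVec z)‖} = ∅ := by
        ext c; simp only [Set.mem_empty_iff_false, iff_false, Set.mem_setOf_eq]
        rintro ⟨z, hz, _⟩
        have : ‖toE z‖ = 0 := by
          simp [toE, EuclideanSpace.norm_eq]
        linarith
      rw [this, Real.sInf_empty]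
    · exact le_rfl
  · unfold smin
    split
    · -- r ≤ m case
      apply csInf_le_csInf
      · exact ⟨0, fun c hc => by rcases hc with ⟨z, _, rfl⟩; exact norm_nonneg _⟩
      · obtain ⟨j⟩ : Nonempty (Fin r) := ⟨⟨0, hr⟩⟩
        refine ⟨_, j, 0, ⟨fun i => le_rfl, by simp⟩, rfl, rfl⟩
      · rintro c ⟨j, x, hx, hxj, rfl⟩
        refine ⟨(Pi.single j 1 : Fin r → ℝ) - x, ?_, ?_⟩
        · set z : Fin r → ℝ := (Pi.single j 1 : Fin r → ℝ) - x with hzdef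
          have h1 : |z j| ≤ ‖toE z‖ := by
            rw [EuclideanSpace.norm_eq (toE z)]
            have h3 : |z j| = Real.sqrt (‖z j‖ ^ 2) := by
              rw [Real.norm_eq_abs, Real.sqrt_sq_eq_abs, abs_abs]
            rw [h3]
            apply Real.sqrt_le_sqrt
            exact Finset.single_le_sum (f := fun i => ‖z i‖ ^ 2)
              (fun i _ => sq_nonneg _) (Finset.mem_univ j)
          have h2 : z j = 1 := by
            simp [hzdef, Pi.single_eq_same, hxj]
          rw [h2] at h1
          simpa using h1
        · congr 1
          have : W.mulVec ((Pi.single j 1 : Fin r → ℝ) - x)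
              = W.mulVec (Pi.single j 1) - W.mulVec x :=
            Matrix.mulVec_sub W _ _
          rw [this]
          have hsingle : W.mulVec (Pi.single j 1) = fun i => W i j := by
            ext i
            rw [Matrix.mulVec_single]
            simp
          rw [hsingle]
          rfl
    · -- m < r
      exact Real.sInf_nonneg hA_nonneg
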